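/- Let φ be holomorphic on a neighborhood of L·E_ρ (ρ > 1, L ≥ 1) with M := sup_{L·E_ρ}|φ|, and fix B > 0. Assume the Bernstein inequality E_m(h) ≤ C(ρ)·(sup_{E_ρ}|h|)·ρ^{-m}. Then for every f ∈ C([-1,1]) that is NOT real-analytic on [-1,1] — so that limsup_m E_m(f)^{1/m} = 1 — the network approximation errors ε_m := inf{‖f − g‖_∞ : g = ∑_{k=1}^m λ_k φ(α_k·), ∑|λ_k| ≤ B, |α_k| ≤ L} satisfy limsup_m ε_m^{1/m} = 1; in particular ε_m cannot decay geometrically. -/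

import Mathlib

open Filter

/-- Closed Bernstein ellipse region with parameter ρ (image of the annulus 1 ≤ |w| ≤ ρ
under the Joukowski map). -/
noncomputable def bernsteinRegion (ρ : ℝ) : Set ℂ :=
  {z | ∃ w : ℂ, 1 ≤ ‖w‖ ∧ ‖w‖ ≤ ρ ∧ z = (w + w⁻¹) / 2}

/-- Uniform norm of a function on [-1,1]. -/
noncomputable def uNorm (f : ℝ → ℝ) : ℝ :=
  sSup ((fun x => |f x|) '' Set.Icc (-1 : ℝ) 1)

/-- Error of best uniform approximation on [-1,1] by polynomials of degree ≤ m. -/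
noncomputable def bestApprox (m : ℕ) (f : ℝ → ℝ) : ℝ :=
  sInf {e : ℝ | ∃ p : Polynomial ℝ, p.natDegree ≤ m ∧
    ∀ x ∈ Set.Icc (-1 : ℝ) 1, |f x - Polynomial.eval x p| ≤ e}

lemma joukowski_sum (w : ℂ) (hw : w ≠ 0) :
    ‖(w + w⁻¹) / 2 - 1‖ + ‖(w + w⁻¹) / 2 + 1‖
      = ‖w‖ + (‖w‖)⁻¹ := by
  have h1 : (w + w⁻¹) / 2 - 1 = (w - 1) ^ 2 / (2 * w) := by field_simp; ring
  have h2 : (w + w⁻¹) / 2 + 1 = (w + 1) ^ 2 / (2 * w) := by field_simp; ring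
  have hsq : ‖w - 1‖ ^ 2 + ‖w + 1‖ ^ 2
      = 2 * ‖w‖ ^ 2 + 2 := by
    rw [Complex.sq_norm, Complex.sq_norm, Complex.sq_norm]
    simp [Complex.normSq_apply]
    ring
  have haw : (0:ℝ) < ‖w‖ := norm_pos_iff.mpr hw
  rw [h1, h2, norm_div, norm_div, norm_pow, norm_pow, norm_mul, ← add_div, hsq,
    Complex.norm_two]
  field_simp

lemma sum_inv_mono {a b : ℝ} (ha : 1 ≤ a) (hab : a ≤ b) : a + a⁻¹ ≤ b + b⁻¹ := by
  have ha0 : (0:ℝ) < a := by linarith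
  have hb0 : (0:ℝ) < b := by linarith
  have key : b + b⁻¹ - (a + a⁻¹) = (b - a) * (a * b - 1) / (a * b) := by
    field_simp; ring
  have h1 : (0:ℝ) ≤ (b - a) * (a * b - 1) / (a * b) := by
    apply div_nonneg
    · apply mul_nonneg <;> nlinarith
    · positivity
  linarith

lemma sum_inv_strict {a b : ℝ} (hb : 1 ≤ b) (hab : b < a) : b + b⁻¹ < a + a⁻¹ := by
  have hb0 : (0:ℝ) < b := by linarith
  have ha0 : (0:ℝ) < a := by linarith
  have key : a + a⁻¹ - (b + b⁻¹) = (a - b) * (b * a - 1) / (b * a) := by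
    field_simp; ring
  have h1 : (0:ℝ) < (a - b) * (b * a - 1) / (b * a) := by
    apply div_pos
    · apply mul_pos <;> nlinarith
    · positivity
  linarith

lemma sum_inv_mono_rev {a b : ℝ} (ha : 1 ≤ a) (hb : 1 ≤ b) (h : a + a⁻¹ ≤ b + b⁻¹) :
    a ≤ b := by
  by_contra hab
  push_neg at hab
  have := sum_inv_strict hb hab
  linarith

lemma mem_bern_iff {ρ : ℝ} (hρ : 1 ≤ ρ) (z : ℂ) :
    z ∈ bernsteinRegion ρ ↔
      ‖z - 1‖ + ‖z + 1‖ ≤ ρ + ρ⁻¹ := by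
  constructor
  · rintro ⟨w, hw1, hwρ, rfl⟩
    have hw0 : w ≠ 0 := by
      intro h; rw [h] at hw1; simp at hw1; linarith
    rw [joukowski_sum w hw0]
    exact sum_inv_mono hw1 hwρ
  · intro hz
    obtain ⟨s, hs⟩ := IsAlgClosed.exists_pow_nat_eq (z ^ 2 - 1) (n := 2) (by norm_num)
    have hprod : (z + s) * (z - s) = 1 := by
      have : z ^ 2 - s ^ 2 = 1 := by rw [hs]; ring
      linear_combination this
    have habs : ‖z + s‖ * ‖z - s‖ = 1 := by
      rw [← norm_mul, hprod, norm_one]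
    obtain ⟨w, hw1, hwz⟩ : ∃ w : ℂ, 1 ≤ ‖w‖ ∧ z = (w + w⁻¹) / 2 := by
      rcases le_or_gt 1 (‖z + s‖) with h1 | h1
      · refine ⟨z + s, h1, ?_⟩
        have hinv : (z + s)⁻¹ = z - s :=
          (eq_inv_of_mul_eq_one_left (by linear_combination hprod)).symm
        rw [hinv]; ring
      · refine ⟨z - s, ?_, ?_⟩
        · have hpos : 0 < ‖z + s‖ := by
            rcases eq_or_lt_of_le (norm_nonneg (z + s)) with h | h
            · exfalso; rw [← h] at habs; simp at habs
            · exact h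
          rw [← habs]
          nlinarith [norm_nonneg (z - s)]
        · have hinv : (z - s)⁻¹ = z + s :=
            (eq_inv_of_mul_eq_one_left (by linear_combination hprod)).symm
          rw [hinv]; ring
    have hw0 : w ≠ 0 := by
      intro h; rw [h] at hw1; simp at hw1; linarith
    refine ⟨w, hw1, ?_, hwz⟩
    have hj := joukowski_sum w hw0
    rw [← hwz] at hj
    rw [hj] at hz
    exact sum_inv_mono_rev hw1 hρ hz

lemma bern_smul {ρ : ℝ} (hρ : 1 ≤ ρ) {t : ℝ} (ht : |t| ≤ 1) {z : ℂ}
    (hz : z ∈ bernsteinRegion ρ) : (t : ℂ) * z ∈ bernsteinRegion ρ := by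
  rw [mem_bern_iff hρ] at hz ⊢
  have h1 : (t : ℂ) * z - 1 = (((1 + t) / 2 : ℝ) : ℂ) * (z - 1)
      + (((1 - t) / 2 : ℝ) : ℂ) * (-z - 1) := by push_cast; ring
  have h2 : (t : ℂ) * z + 1 = (((1 + t) / 2 : ℝ) : ℂ) * (z + 1)
      + (((1 - t) / 2 : ℝ) : ℂ) * (-(z - 1)) := by push_cast; ring
  have ht1 : -1 ≤ t := (abs_le.mp ht).1
  have ht2 : t ≤ 1 := (abs_le.mp ht).2
  have ha : (0:ℝ) ≤ (1 + t) / 2 := by linarith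
  have hb : (0:ℝ) ≤ (1 - t) / 2 := by linarith
  have e1 : ‖(t : ℂ) * z - 1‖
      ≤ (1 + t) / 2 * ‖z - 1‖ + (1 - t) / 2 * ‖z + 1‖ := by
    rw [h1]
    refine le_trans (norm_add_le _ _) ?_
    rw [norm_mul, norm_mul, Complex.norm_real, Real.norm_eq_abs, Complex.norm_real, Real.norm_eq_abs,
      abs_of_nonneg ha, abs_of_nonneg hb]
    have : ‖-z - 1‖ = ‖z + 1‖ := by
      rw [show -z - 1 = -(z + 1) by ring, norm_neg]
    rw [this]
  have e2 : ‖(t : ℂ) * z + 1‖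
      ≤ (1 + t) / 2 * ‖z + 1‖ + (1 - t) / 2 * ‖z - 1‖ := by
    rw [h2]
    refine le_trans (norm_add_le _ _) ?_
    rw [norm_mul, norm_mul, Complex.norm_real, Real.norm_eq_abs, Complex.norm_real, Real.norm_eq_abs,
      abs_of_nonneg ha, abs_of_nonneg hb, norm_neg]
  nlinarith [hz, e1, e2]

lemma one_mem_bern {ρ : ℝ} (hρ : 1 ≤ ρ) : (1 : ℂ) ∈ bernsteinRegion ρ :=
  ⟨1, by simp, by simpa using hρ, by norm_num⟩

lemma real_mem_bern {ρ : ℝ} (hρ : 1 ≤ ρ) {x : ℝ} (hx : x ∈ Set.Icc (-1:ℝ) 1) :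
    (x : ℂ) ∈ bernsteinRegion ρ := by
  have := bern_smul hρ (t := x) (abs_le.mpr ⟨hx.1, hx.2⟩) (one_mem_bern hρ)
  simpa using this

lemma tendsto_rpow_one_div_nat {c : ℝ} (hc : 0 < c) :
    Filter.Tendsto (fun m : ℕ => c ^ ((1:ℝ)/m)) Filter.atTop (nhds 1) := by
  have h0 : Filter.Tendsto (fun m : ℕ => (1:ℝ)/m) Filter.atTop (nhds 0) :=
    tendsto_one_div_atTop_nhds_zero_nat
  have h1 := (Real.continuousAt_const_rpow (ne_of_gt hc)).tendsto.comp h0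
  simpa [Function.comp_def, Real.rpow_zero] using h1

set_option maxHeartbeats 1600000 in
/-- on non-analytic targets (limsup E_m(f)^{1/m} = 1), constrained
analytic-activation networks cannot achieve geometric decay: limsup ε_m^{1/m} = 1. -/
theorem stmt19 (ρ L M B Cρ : ℝ) (hρ : 1 < ρ) (hL : 1 ≤ L) (hB : 0 < B) (hCρ : 0 < Cρ)
    (φ : ℝ → ℝ) (Φ : ℂ → ℂ) (U : Set ℂ) (hU : IsOpen U)
    (hsub : (fun z => (L : ℂ) * z) '' bernsteinRegion ρ ⊆ U)
    (hΦ : DifferentiableOn ℂ Φ U) (hext : ∀ x : ℝ, Φ x = φ x)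
    (hM : ∀ w ∈ (fun z => (L : ℂ) * z) '' bernsteinRegion ρ, ‖Φ w‖ ≤ M)
    (hBern : ∀ (h : ℝ → ℝ) (H : ℂ → ℂ) (Mh : ℝ),
      DifferentiableOn ℂ H (bernsteinRegion ρ) →
      (∀ x ∈ Set.Icc (-1 : ℝ) 1, H x = h x) →
      (∀ z ∈ bernsteinRegion ρ, ‖H z‖ ≤ Mh) →
      ∀ n : ℕ, bestApprox n h ≤ Cρ * Mh / ρ ^ n)
    (f : ℝ → ℝ) (hf : ContinuousOn f (Set.Icc (-1 : ℝ) 1))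
    (hna : limsup (fun m : ℕ => (bestApprox m f) ^ ((1 : ℝ) / m)) atTop = 1)
    (ε : ℕ → ℝ)
    (hε : ∀ m : ℕ, ε m = sInf {e : ℝ | ∃ lam alp : Fin m → ℝ,
      (∑ k, |lam k|) ≤ B ∧ (∀ k, |alp k| ≤ L) ∧
      e = uNorm (fun x => f x - ∑ k, lam k * φ (alp k * x))}) :
    limsup (fun m : ℕ => (ε m) ^ ((1 : ℝ) / m)) atTop = 1 := by
  classical
  have hρ1 : (1:ℝ) ≤ ρ := hρ.le
  have hL0 : (0:ℝ) < L := lt_of_lt_of_le one_pos hL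
  have hLC : (L:ℂ) ≠ 0 := by exact_mod_cast ne_of_gt hL0
  -- scaled points stay in the dilated region
  have hImg : ∀ a : ℝ, |a| ≤ L → ∀ z ∈ bernsteinRegion ρ,
      (a:ℂ) * z ∈ (fun z => (L : ℂ) * z) '' bernsteinRegion ρ := by
    intro a ha z hz
    have h1 : |a / L| ≤ 1 := by
      rw [abs_div, abs_of_pos hL0]
      exact (div_le_one hL0).mpr ha
    refine ⟨((a / L : ℝ) : ℂ) * z, bern_smul hρ1 h1 hz, ?_⟩
    push_cast
    field_simp
  have hUmem : ∀ a : ℝ, |a| ≤ L → ∀ z ∈ bernsteinRegion ρ, ((a:ℂ) * z) ∈ U :=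
    fun a ha z hz => hsub (hImg a ha z hz)
  have hM0 : 0 ≤ M :=
    le_trans (norm_nonneg _) (hM ((L:ℂ) * 1) ⟨1, one_mem_bern hρ1, rfl⟩)
  -- continuity of dilated activations on [-1,1]
  have hφcont : ∀ a : ℝ, |a| ≤ L →
      ContinuousOn (fun x : ℝ => φ (a * x)) (Set.Icc (-1:ℝ) 1) := by
    intro a ha
    have hmap : ∀ x ∈ Set.Icc (-1:ℝ) 1, ((a:ℂ) * (x:ℂ)) ∈ U := fun x hx =>
      hUmem a ha x (real_mem_bern hρ1 hx)
    have h1 : ContinuousOn (fun x : ℝ => Φ ((a:ℂ) * (x:ℂ))) (Set.Icc (-1:ℝ) 1) :=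
      hΦ.continuousOn.comp (Continuous.continuousOn (by continuity)) hmap
    have h2 : ContinuousOn (fun x : ℝ => (Φ ((a:ℂ) * (x:ℂ))).re) (Set.Icc (-1:ℝ) 1) :=
      Complex.continuous_re.comp_continuousOn h1
    refine h2.congr fun x hx => ?_
    have : Φ ((a:ℂ) * (x:ℂ)) = ((φ (a * x) : ℝ) : ℂ) := by
      rw [show ((a:ℂ) * (x:ℂ)) = ((a * x : ℝ) : ℂ) by push_cast; ring, hext]
    beta_reduce
    rw [this, Complex.ofReal_re]
  have hgcont : ∀ (m : ℕ) (lam alp : Fin m → ℝ), (∀ k, |alp k| ≤ L) →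
      ContinuousOn (fun x => ∑ k, lam k * φ (alp k * x)) (Set.Icc (-1:ℝ) 1) := by
    intro m lam alp halp
    apply continuousOn_finset_sum
    intro k _
    exact (hφcont (alp k) (halp k)).const_smul (lam k)
  -- the admissible-error sets
  set S : ℕ → Set ℝ := fun m => {e : ℝ | ∃ lam alp : Fin m → ℝ,
      (∑ k, |lam k|) ≤ B ∧ (∀ k, |alp k| ≤ L) ∧
      e = uNorm (fun x => f x - ∑ k, lam k * φ (alp k * x))} with hS
  have hSmem : ∀ m, uNorm f ∈ S m := by
    intro m
    refine ⟨fun _ => 0, fun _ => 0, by simp [hB.le], fun k => by simp; linarith, ?_⟩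
    simp [uNorm]
  have hSnonneg : ∀ m, ∀ e ∈ S m, 0 ≤ e := by
    rintro m e ⟨lam, alp, -, -, rfl⟩
    exact Real.sSup_nonneg fun x ⟨y, _, hy⟩ => hy ▸ abs_nonneg _
  have hεnonneg : ∀ m, 0 ≤ ε m := by
    intro m; rw [hε]
    exact Real.sInf_nonneg (hSnonneg m)
  have hεle : ∀ m, ε m ≤ uNorm f := by
    intro m; rw [hε]
    exact csInf_le ⟨0, fun e he => hSnonneg m e he⟩ (hSmem m)
  -- best-approximation error of f is nonnegative
  have hEnonneg : ∀ m, 0 ≤ bestApprox m f := by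
    intro m
    apply Real.sInf_nonneg
    rintro e ⟨p, -, hb⟩
    exact le_trans (abs_nonneg _) (hb 0 ⟨by norm_num, by norm_num⟩)
  -- key barrier estimate
  have hkey : ∀ m : ℕ, ∀ e ∈ S m, bestApprox m f ≤ e + Cρ * (B * M) / ρ ^ m := by
    rintro m e ⟨lam, alp, hlam, halp, rfl⟩
    set g : ℝ → ℝ := fun x => ∑ k, lam k * φ (alp k * x) with hg
    set H : ℂ → ℂ := fun z => ∑ k, (lam k : ℂ) * Φ ((alp k : ℂ) * z) with hH
    have hHdiff : DifferentiableOn ℂ H (bernsteinRegion ρ) := by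
      apply DifferentiableOn.fun_sum
      intro k _
      have h1 : DifferentiableOn ℂ (fun z => Φ ((alp k : ℂ) * z)) (bernsteinRegion ρ) :=
        hΦ.comp ((differentiable_id.const_mul _).differentiableOn)
          fun z hz => hUmem (alp k) (halp k) z hz
      exact h1.const_mul _
    have hHeq : ∀ x ∈ Set.Icc (-1:ℝ) 1, H x = g x := by
      intro x hx
      have hφk : ∀ k : Fin m, Φ ((alp k : ℂ) * (x:ℂ)) = ((φ (alp k * x) : ℝ) : ℂ) := by
        intro k
        rw [show ((alp k : ℂ) * (x:ℂ)) = ((alp k * x : ℝ) : ℂ) by push_cast; ring, hext]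
      rw [hH, hg]
      push_cast
      exact Finset.sum_congr rfl fun k _ => by rw [hφk k]
    have hHbd : ∀ z ∈ bernsteinRegion ρ, ‖H z‖ ≤ B * M := by
      intro z hz
      calc ‖H z‖ ≤ ∑ k, ‖(lam k : ℂ) * Φ ((alp k : ℂ) * z)‖ :=
            norm_sum_le _ _
        _ ≤ ∑ k, |lam k| * M := by
            apply Finset.sum_le_sum
            intro k _
            rw [norm_mul, Complex.norm_real, Real.norm_eq_abs]
            exact mul_le_mul_of_nonneg_left
              (hM _ (hImg (alp k) (halp k) z hz)) (abs_nonneg _)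
        _ = (∑ k, |lam k|) * M := by rw [Finset.sum_mul]
        _ ≤ B * M := mul_le_mul_of_nonneg_right hlam hM0
    have hBAg : bestApprox m g ≤ Cρ * (B * M) / ρ ^ m := hBern g H (B * M) hHdiff hHeq hHbd m
    -- pass from best approximation of g to best approximation of f
    apply le_of_forall_pos_le_add
    intro δ hδ
    have hgc : ContinuousOn g (Set.Icc (-1:ℝ) 1) := hgcont m lam alp halp
    have hTne : Set.Nonempty {e : ℝ | ∃ p : Polynomial ℝ, p.natDegree ≤ m ∧
        ∀ x ∈ Set.Icc (-1 : ℝ) 1, |g x - Polynomial.eval x p| ≤ e} := by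
      obtain ⟨Cg, hCg⟩ := isCompact_Icc.exists_bound_of_continuousOn hgc
      exact ⟨Cg, 0, by simp, fun x hx => by simpa using hCg x hx⟩
    have hlt : sInf {e : ℝ | ∃ p : Polynomial ℝ, p.natDegree ≤ m ∧
        ∀ x ∈ Set.Icc (-1 : ℝ) 1, |g x - Polynomial.eval x p| ≤ e}
          < Cρ * (B * M) / ρ ^ m + δ := by
      rw [show sInf {e : ℝ | ∃ p : Polynomial ℝ, p.natDegree ≤ m ∧
        ∀ x ∈ Set.Icc (-1 : ℝ) 1, |g x - Polynomial.eval x p| ≤ e} = bestApprox m g from rfl]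
      linarith
    obtain ⟨e', ⟨p, hpdeg, hpbd⟩, he'⟩ := exists_lt_of_csInf_lt hTne hlt
    have hbdd : BddAbove ((fun x => |f x - g x|) '' Set.Icc (-1:ℝ) 1) :=
      isCompact_Icc.bddAbove_image ((hf.sub hgc).abs)
    have hfg : ∀ x ∈ Set.Icc (-1:ℝ) 1,
        |f x - g x| ≤ uNorm (fun x => f x - g x) := fun x hx =>
      le_csSup hbdd ⟨x, hx, rfl⟩
    have hmemF : uNorm (fun x => f x - g x) + e' ∈ {e : ℝ | ∃ p : Polynomial ℝ,
        p.natDegree ≤ m ∧ ∀ x ∈ Set.Icc (-1 : ℝ) 1, |f x - Polynomial.eval x p| ≤ e} := by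
      refine ⟨p, hpdeg, fun x hx => ?_⟩
      calc |f x - Polynomial.eval x p| ≤ |f x - g x| + |g x - Polynomial.eval x p| := by
            have : f x - Polynomial.eval x p = (f x - g x) + (g x - Polynomial.eval x p) := by
              ring
            rw [this]; exact abs_add_le _ _
        _ ≤ uNorm (fun x => f x - g x) + e' := add_le_add (hfg x hx) (hpbd x hx)
    have hFlb : ∀ e'' ∈ {e : ℝ | ∃ p : Polynomial ℝ,
        p.natDegree ≤ m ∧ ∀ x ∈ Set.Icc (-1 : ℝ) 1, |f x - Polynomial.eval x p| ≤ e},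
        (0:ℝ) ≤ e'' := by
      rintro e'' ⟨p', -, hb⟩
      exact le_trans (abs_nonneg _) (hb 0 ⟨by norm_num, by norm_num⟩)
    have : bestApprox m f ≤ uNorm (fun x => f x - g x) + e' := csInf_le ⟨0, hFlb⟩ hmemF
    linarith
  -- lower bound on ε m
  have hlow : ∀ m : ℕ, bestApprox m f - Cρ * (B * M) / ρ ^ m ≤ ε m := by
    intro m
    rw [hε]
    apply le_csInf ⟨uNorm f, hSmem m⟩
    intro e he
    have := hkey m e he
    linarith
  -- limsup bookkeeping
  set u : ℕ → ℝ := fun m => (ε m) ^ ((1:ℝ)/m) with hu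
  have hu0 : ∀ m, 0 ≤ u m := fun m => Real.rpow_nonneg (hεnonneg m) _
  set K : ℝ := max 1 (uNorm f) with hK
  have hK1 : (1:ℝ) ≤ K := le_max_left _ _
  have hK0 : (0:ℝ) < K := lt_of_lt_of_le one_pos hK1
  have hdivle : ∀ m : ℕ, (1:ℝ)/m ≤ 1 := by
    intro m
    rcases Nat.eq_zero_or_pos m with h | h
    · simp [h]
    · exact div_le_one_of_le₀ (by exact_mod_cast h) (Nat.cast_nonneg m)
  have huK : ∀ m, u m ≤ K ^ ((1:ℝ)/m) := fun m =>
    Real.rpow_le_rpow (hεnonneg m) (le_trans (hεle m) (le_max_right _ _)) (by positivity)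
  have huB : IsBoundedUnder (· ≤ ·) atTop u := by
    refine isBoundedUnder_of ⟨K, fun m => le_trans (huK m) ?_⟩
    calc K ^ ((1:ℝ)/m) ≤ K ^ (1:ℝ) := Real.rpow_le_rpow_of_exponent_le hK1 (hdivle m)
      _ = K := Real.rpow_one K
  have hKtend : Tendsto (fun m : ℕ => K ^ ((1:ℝ)/m)) atTop (nhds 1) :=
    tendsto_rpow_one_div_nat hK0
  have h_le : limsup u atTop ≤ 1 := by
    have h1 : limsup u atTop ≤ limsup (fun m : ℕ => K ^ ((1:ℝ)/m)) atTop :=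
      limsup_le_limsup (Eventually.of_forall huK)
        (isCoboundedUnder_le_of_le atTop hu0) hKtend.isBoundedUnder_le
    rw [hKtend.limsup_eq] at h1
    exact h1
  refine le_antisymm h_le (le_of_not_gt fun hlt => ?_)
  set l : ℝ := limsup u atTop with hl
  set c : ℝ := max ((l + 1) / 2) ρ⁻¹ with hc
  have hρinv : (0:ℝ) < ρ⁻¹ := inv_pos.mpr (lt_trans one_pos hρ)
  have hc1 : c < 1 := max_lt (by simp only [hl]; linarith) (inv_lt_one_of_one_lt₀ hρ)
  have hc0 : (0:ℝ) < c := lt_of_lt_of_le hρinv (le_max_right _ _)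
  have hlc : l < c := lt_of_lt_of_le (by linarith) (le_max_left _ _)
  have hev : ∀ᶠ m in atTop, u m < c := eventually_lt_of_limsup_lt hlc huB
  set D : ℝ := Cρ * (B * M) with hD
  have hD0 : (0:ℝ) ≤ D := mul_nonneg hCρ.le (mul_nonneg hB.le hM0)
  have hev2 : ∀ᶠ m in atTop, (bestApprox m f) ^ ((1:ℝ)/m) ≤ (1 + D) ^ ((1:ℝ)/m) * c := by
    filter_upwards [hev, eventually_ge_atTop 1] with m hm hm1
    have hm0 : ((m:ℝ)) ≠ 0 := by
      have : (1:ℝ) ≤ (m:ℝ) := by exact_mod_cast hm1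
      linarith
    have hmpos : (0:ℝ) ≤ (m:ℝ) := Nat.cast_nonneg m
    have hεc : ε m ≤ c ^ (m:ℝ) := by
      have h1 : ε m = (u m) ^ (m:ℝ) := by
        rw [hu]
        rw [← Real.rpow_mul (hεnonneg m), one_div_mul_cancel hm0, Real.rpow_one]
      rw [h1]
      exact Real.rpow_le_rpow (hu0 m) hm.le hmpos
    have hpow : D / ρ ^ m ≤ D * c ^ (m:ℝ) := by
      rw [div_eq_mul_inv, ← inv_pow]
      apply mul_le_mul_of_nonneg_left _ hD0
      rw [Real.rpow_natCast]
      exact pow_le_pow_left₀ (le_of_lt hρinv) (le_max_right _ _) m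
    have hE : bestApprox m f ≤ (1 + D) * c ^ (m:ℝ) := by
      have h1 := hlow m
      have h2 : bestApprox m f ≤ ε m + D / ρ ^ m := by
        rw [hD]; linarith
      have h3 : ε m + D / ρ ^ m ≤ c ^ (m:ℝ) + D * c ^ (m:ℝ) := add_le_add hεc hpow
      have h4 : c ^ (m:ℝ) + D * c ^ (m:ℝ) = (1 + D) * c ^ (m:ℝ) := by ring
      linarith
    calc (bestApprox m f) ^ ((1:ℝ)/m) ≤ ((1 + D) * c ^ (m:ℝ)) ^ ((1:ℝ)/m) :=
          Real.rpow_le_rpow (hEnonneg m) hE (by positivity)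
      _ = (1 + D) ^ ((1:ℝ)/m) * (c ^ (m:ℝ)) ^ ((1:ℝ)/m) :=
          Real.mul_rpow (by linarith) (Real.rpow_nonneg hc0.le _)
      _ = (1 + D) ^ ((1:ℝ)/m) * c := by
          rw [← Real.rpow_mul hc0.le, mul_one_div_cancel hm0, Real.rpow_one]
  have hDtend : Tendsto (fun m : ℕ => (1 + D) ^ ((1:ℝ)/m) * c) atTop (nhds c) := by
    have h1 := (tendsto_rpow_one_div_nat (show (0:ℝ) < 1 + D by linarith)).mul_const c
    simpa using h1
  have hvc : limsup (fun m : ℕ => (bestApprox m f) ^ ((1:ℝ)/m)) atTop ≤ c := by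
    have h1 : limsup (fun m : ℕ => (bestApprox m f) ^ ((1:ℝ)/m)) atTop
        ≤ limsup (fun m : ℕ => (1 + D) ^ ((1:ℝ)/m) * c) atTop :=
      limsup_le_limsup hev2
        (isCoboundedUnder_le_of_le atTop fun m => Real.rpow_nonneg (hEnonneg m) _)
        hDtend.isBoundedUnder_le
    rw [hDtend.limsup_eq] at h1
    exact h1
  rw [hna] at hvc
  linarith
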